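/- Let s, r be positive integers, x = s·log q / log(1 + 1/r), and a_k = ⌊1/(q^{k/x} − 1)⌋ for k ≥ 1. Let h be an x-semi-superior highly composite polynomial, and let N = deg h − u with 1 ≤ u ≤ s − 1. Then T(N) satisfies (u/s)·log(1 + 1/r) ≤ log τ(h) − log T(N) ≤ log(1 + 1/a_u), where T(N) = max{ τ(f) : f ∈ 𝔽_q[t] monic of degree N }. (Moreover T(deg h) = τ(h).) -/

import Mathlib

open Polynomial

/-- The number of monic divisors of a polynomial. -/
noncomputable def tau {Fq : Type} [Field Fq] (f : Fq[X]) : ℕ :=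
  {d : Fq[X] | d.Monic ∧ d ∣ f}.ncard

/-- `h` is an `x`-semi-superior highly composite polynomial. -/
noncomputable def IsSSHC {Fq : Type} [Field Fq] [Fintype Fq] (x : ℝ) (h : Fq[X]) : Prop :=
  h.Monic ∧ ∀ f : Fq[X], f.Monic →
    (tau f : ℝ) * (Fintype.card Fq : ℝ) ^ (-(f.natDegree : ℝ) / x) ≤
    (tau h : ℝ) * (Fintype.card Fq : ℝ) ^ (-(h.natDegree : ℝ) / x)

/-- `T(N)`: the maximum of `tau` over monic polynomials of degree `N`. -/
noncomputable def Tmax (Fq : Type) [Field Fq] (N : ℕ) : ℕ :=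
  sSup {t : ℕ | ∃ f : Fq[X], f.Monic ∧ f.natDegree = N ∧ tau f = t}

/-! ### Arithmetic auxiliary lemmas -/

lemma aux_exists_pow_eq {b r u d : ℕ} (hr : 0 < r) (hd : 2 ≤ d) (hcop : Nat.Coprime u d)
    (h : b ^ d = r ^ u) : ∃ R : ℕ, R ^ d = r := by
  obtain ⟨k, -, hk⟩ := Nat.exists_mul_mod_eq_one_of_coprime hcop (by omega)
  have hdm : u * k = d * (u * k / d) + 1 := by
    conv_lhs => rw [← Nat.div_add_mod (u * k) d]
    rw [hk]
  set m := u * k / d with hm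
  have key : (b ^ k) ^ d = (r ^ m) ^ d * r := by
    calc (b ^ k) ^ d = (b ^ d) ^ k := by rw [← pow_mul, ← pow_mul, Nat.mul_comm]
    _ = (r ^ u) ^ k := by rw [h]
    _ = r ^ (u * k) := by rw [← pow_mul]
    _ = (r ^ m) ^ d * r := by
        rw [hdm, pow_add, pow_one, mul_comm d m, pow_mul]
  have hdvd : r ^ m ∣ b ^ k := by
    rw [← Nat.pow_dvd_pow_iff (show d ≠ 0 by omega), key]
    exact Dvd.intro r rfl
  obtain ⟨c, hc⟩ := hdvd
  refine ⟨c, ?_⟩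
  have h2 : (r ^ m) ^ d * c ^ d = (r ^ m) ^ d * r := by
    rw [← mul_pow, ← hc, key]
  have h3 : (r ^ m) ^ d ≠ 0 := by positivity
  exact (Nat.eq_of_mul_eq_mul_left (Nat.pos_of_ne_zero h3) h2)

lemma aux_no_consecutive_powers {R S d : ℕ} (hR : 0 < R) (hd : 2 ≤ d)
    (h : S ^ d = R ^ d + 1) : False := by
  have hSR : R + 1 ≤ S := by
    by_contra hc
    push_neg at hc
    have := Nat.pow_le_pow_left (show S ≤ R by omega) d
    omega
  have h1 : (R + 1) ^ d ≤ S ^ d := Nat.pow_le_pow_left hSR d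
  have h2 : R ^ d + 2 ≤ (R + 1) ^ d := by
    have e : d = (d - 2) + 2 := by omega
    rw [e, pow_add, pow_add]
    have l1 : R ^ (d-2) ≤ (R+1) ^ (d-2) := Nat.pow_le_pow_left (by omega) _
    have l2 : R ^ (d-2) * R ^ 2 + 2 ≤ R ^ (d-2) * (R+1)^2 := by
      have hRp : 1 ≤ R ^ (d - 2) := Nat.one_le_pow _ _ hR
      nlinarith
    calc R ^ (d-2) * R ^ 2 + 2 ≤ R ^ (d-2) * (R+1)^2 := l2
      _ ≤ (R+1) ^ (d-2) * (R+1) ^ 2 := Nat.mul_le_mul_right _ l1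
  omega

lemma aux_nat_no_sol {A B r u s : ℕ} (hr : 0 < r) (hu : 0 < u) (hus : u < s)
    (h1 : A ^ s = (r + 1) ^ u) (h2 : B ^ s = r ^ u) : False := by
  set g := Nat.gcd u s with hg
  have hgpos : 0 < g := Nat.gcd_pos_of_pos_left s hu
  set d := s / g with hd
  set u' := u / g with hu'
  have hcop : Nat.Coprime u' d := Nat.coprime_div_gcd_div_gcd hgpos
  have hsd : s = g * d := by rw [hd, hg]; exact (Nat.mul_div_cancel' (Nat.gcd_dvd_right u s)).symm
  have hud : u = g * u' := by rw [hu', hg]; exact (Nat.mul_div_cancel' (Nat.gcd_dvd_left u s)).symm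
  have hd2 : 2 ≤ d := by
    rcases Nat.lt_or_ge d 2 with hc | hc
    · interval_cases d
      · omega
      · have h4 : g ∣ u := ⟨u', hud⟩
        have h5 : s ∣ u := by rwa [hsd, Nat.mul_one]
        have := Nat.le_of_dvd hu h5
        omega
    · exact hc
  have e1 : (A ^ d) ^ g = ((r + 1) ^ u') ^ g := by
    rw [← pow_mul, ← pow_mul, mul_comm d g, mul_comm u' g, ← hsd, ← hud, h1]
  have e2 : (B ^ d) ^ g = (r ^ u') ^ g := by
    rw [← pow_mul, ← pow_mul, mul_comm d g, mul_comm u' g, ← hsd, ← hud, h2]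
  have e1' : A ^ d = (r + 1) ^ u' := Nat.pow_left_injective (by omega) e1
  have e2' : B ^ d = r ^ u' := Nat.pow_left_injective (by omega) e2
  obtain ⟨R, hR⟩ := aux_exists_pow_eq hr hd2 hcop e2'
  obtain ⟨S, hS⟩ := aux_exists_pow_eq (show 0 < r + 1 by omega) hd2 hcop e1'
  have hRpos : 0 < R := by
    rcases Nat.eq_zero_or_pos R with h0 | h0
    · rw [h0, zero_pow (by omega : d ≠ 0)] at hR; omega
    · exact h0
  exact aux_no_consecutive_powers hRpos hd2 (by omega : S ^ d = R ^ d + 1)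

lemma aux_irrational_rpow {r u s : ℕ} (hr : 0 < r) (hu : 0 < u) (hus : u < s) :
    Irrational ((1 + 1 / (r : ℝ)) ^ ((u : ℝ) / (s : ℝ))) := by
  set θ : ℝ := (1 + 1 / (r : ℝ)) ^ ((u : ℝ) / (s : ℝ)) with hθ
  rintro ⟨ρ, hρ⟩
  have hr0 : (0:ℝ) < (r:ℝ) := by positivity
  have hbase : (0:ℝ) < 1 + 1 / (r:ℝ) := by positivity
  have hθpos : 0 < θ := Real.rpow_pos_of_pos hbase _
  have hs0 : (s:ℝ) ≠ 0 := Nat.cast_ne_zero.mpr (by omega)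
  have hpow : θ ^ (s:ℕ) = (1 + 1/(r:ℝ)) ^ (u:ℕ) := by
    rw [hθ, ← Real.rpow_natCast (_ ^ _) s, ← Real.rpow_mul hbase.le,
      div_mul_cancel₀ _ hs0, Real.rpow_natCast]
  have hρpos : (0:ℚ) < ρ := by
    have : (0:ℝ) < (ρ:ℝ) := hρ ▸ hθpos
    exact_mod_cast this
  have hQ : ρ ^ (s:ℕ) = (1 + 1/(r:ℚ)) ^ (u:ℕ) := by
    have : ((ρ ^ (s:ℕ) : ℚ) : ℝ) = (((1 + 1/(r:ℚ)) ^ (u:ℕ) : ℚ) : ℝ) := by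
      push_cast
      rw [hρ, hpow]
    exact_mod_cast this
  set A : ℕ := ρ.num.toNat with hA
  set B : ℕ := ρ.den with hB
  have hnum : (ρ.num : ℚ) = (A : ℚ) := by
    have hnn : 0 ≤ ρ.num := Rat.num_nonneg.mpr hρpos.le
    rw [hA]
    exact_mod_cast (Int.toNat_of_nonneg hnn).symm
  have hB0 : (B:ℚ) ≠ 0 := by
    have := ρ.den_nz
    exact_mod_cast this
  have hρeq : (ρ : ℚ) = (A : ℚ) / (B : ℚ) := by
    rw [← hnum, hB]; exact_mod_cast (Rat.num_div_den ρ).symm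
  have hr0' : (r:ℚ) ≠ 0 := by positivity
  have hNQ : (A:ℚ) ^ s * (r:ℚ) ^ u = ((r:ℚ) + 1) ^ u * (B:ℚ) ^ s := by
    have h6 := hQ
    rw [hρeq] at h6
    field_simp at h6
    rw [div_pow, div_pow, div_eq_div_iff (by positivity) (by positivity)] at h6
    linear_combination h6
  have hN : A ^ s * r ^ u = (r + 1) ^ u * B ^ s := by exact_mod_cast hNQ
  have hcop : Nat.Coprime A B := by
    have h7 := ρ.reduced
    have hnn : 0 ≤ ρ.num := Rat.num_nonneg.mpr hρpos.le
    have hA' : A = ρ.num.natAbs := by rw [hA]; omega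
    rwa [hA', hB]
  have hc1 : Nat.Coprime (B ^ s) (A ^ s) := Nat.Coprime.pow _ _ hcop.symm
  have hd1 : B ^ s ∣ r ^ u := by
    refine hc1.dvd_of_dvd_mul_left ?_
    exact ⟨(r+1)^u, by linarith [hN]⟩
  have hc2 : Nat.Coprime (r ^ u) ((r+1) ^ u) :=
    Nat.Coprime.pow _ _ (by
      simpa [Nat.add_comm] using
        (Nat.coprime_add_self_right (m := r) (n := 1)).mpr (Nat.coprime_one_right r))
  have hd2 : r ^ u ∣ B ^ s := by
    refine hc2.dvd_of_dvd_mul_left ?_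
    exact ⟨A ^ s, by linarith [hN]⟩
  have hBr : B ^ s = r ^ u := Nat.dvd_antisymm hd1 hd2
  have hAr : A ^ s = (r + 1) ^ u := by
    have hru : 0 < r ^ u := Nat.pow_pos hr
    have h8 : A ^ s * r ^ u = (r+1) ^ u * r ^ u := by rw [hN, hBr]
    exact Nat.eq_of_mul_eq_mul_right hru h8
  exact aux_nat_no_sol hr hu hus hAr hBr

/-! ### Divisor-counting lemmas -/

section TauLemmas

variable {Fq : Type} [Field Fq] [Fintype Fq]

lemma aux_divisors_finite {f : Fq[X]} (hf : f ≠ 0) :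
    {d : Fq[X] | d.Monic ∧ d ∣ f}.Finite := by
  set n := f.natDegree
  have hsub : {d : Fq[X] | d.Monic ∧ d ∣ f} ⊆ {d : Fq[X] | d.natDegree ≤ n} := by
    rintro d ⟨hm, hd⟩
    exact Polynomial.natDegree_le_natDegree (Polynomial.degree_le_of_dvd hd hf)
  refine Set.Finite.subset ?_ hsub
  apply Set.Finite.of_finite_image (f := fun p : Fq[X] => fun i : Fin (n+1) => p.coeff i)
  · exact Set.toFinite _
  · intro p hp q hq hpq
    ext m
    by_cases hm : m ≤ n
    · exact congrFun hpq ⟨m, by omega⟩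
    · rw [Polynomial.coeff_eq_zero_of_natDegree_lt (lt_of_le_of_lt hp (by omega)),
        Polynomial.coeff_eq_zero_of_natDegree_lt (lt_of_le_of_lt hq (by omega))]

lemma aux_tau_pos {f : Fq[X]} (hf : f.Monic) : 0 < tau f := by
  rw [tau, Set.ncard_pos (aux_divisors_finite hf.ne_zero)]
  exact ⟨1, monic_one, one_dvd f⟩

omit [Fintype Fq] in
lemma aux_exists_pow_mul_not_dvd {P : Fq[X]} (hPi : Irreducible P) {f : Fq[X]} (hf : f ≠ 0) :
    ∃ i g, ¬ P ∣ g ∧ f = P ^ i * g := by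
  classical
  have hP0 : P ≠ 0 := hPi.ne_zero
  by_cases H : ∀ i : ℕ, P ^ i ∣ f
  · exfalso
    have h1 := Polynomial.degree_le_of_dvd (H (f.natDegree + 1)) hf
    have hd := Polynomial.natDegree_le_natDegree h1
    rw [Polynomial.natDegree_pow] at hd
    have hP1 : 1 ≤ P.natDegree := hPi.natDegree_pos
    nlinarith
  · push_neg at H
    obtain ⟨j, hj⟩ := H
    have hex : ∃ i, ¬ P ^ (i+1) ∣ f := by
      refine ⟨j, fun hc => hj (dvd_trans (pow_dvd_pow P (by omega)) hc)⟩
    classical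
    let i := Nat.find hex
    have hnotdvd : ¬ P ^ (i+1) ∣ f := Nat.find_spec hex
    have hdvd : P ^ i ∣ f := by
      rcases Nat.eq_zero_or_pos i with h0 | h0
      · rw [h0]; simpa using one_dvd f
      · have h2 := Nat.find_min hex (m := i - 1) (by omega)
        push_neg at h2
        simpa [Nat.sub_add_cancel h0] using h2
    obtain ⟨g, hg⟩ := hdvd
    refine ⟨i, g, fun hPg => hnotdvd ?_, hg⟩
    obtain ⟨g', hg'⟩ := hPg
    exact ⟨g', by rw [hg, hg', pow_succ]; ring⟩

lemma aux_tau_pow_mul {P g : Fq[X]} (hPm : P.Monic) (hPi : Irreducible P)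
    (hg : g.Monic) (hPg : ¬ P ∣ g) (k : ℕ) :
    tau (P ^ k * g) = (k + 1) * tau g := by
  classical
  have hP0 : P ≠ 0 := hPi.ne_zero
  have hg0 : g ≠ 0 := hg.ne_zero
  set Dg := {d : Fq[X] | d.Monic ∧ d ∣ g} with hDg
  have himg : {d : Fq[X] | d.Monic ∧ d ∣ P ^ k * g}
      = (fun pr : ℕ × Fq[X] => P ^ pr.1 * pr.2) '' ((Set.Iic k) ×ˢ Dg) := by
    ext d
    constructor
    · rintro ⟨hdm, hdd⟩
      have hd0 : d ≠ 0 := hdm.ne_zero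
      obtain ⟨i, d', hnd, hdec⟩ := aux_exists_pow_mul_not_dvd hPi hd0
      have hd'm : d'.Monic := by
        have h3 := hdm
        rw [hdec] at h3
        exact (hPm.pow i).of_mul_monic_left h3
      have hik : i ≤ k := by
        by_contra hik
        push_neg at hik
        have h1 : P ^ (k+1) ∣ P ^ k * g := by
          calc P ^ (k+1) ∣ P ^ i := pow_dvd_pow P (by omega)
          _ ∣ d := ⟨d', hdec⟩
          _ ∣ P ^ k * g := hdd
        rw [pow_succ] at h1
        have h2 := (mul_dvd_mul_iff_left (a := P ^ k) (pow_ne_zero k hP0)).mp h1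
        exact hPg h2
      have hd'g : d' ∣ g := by
        have hcop : IsCoprime d' P := (hPi.coprime_iff_not_dvd).mpr hnd |>.symm
        have h1 : d' ∣ P ^ k * g := dvd_trans ⟨P ^ i, by rw [hdec]; ring⟩ hdd
        exact (hcop.pow_right (n := k)).dvd_of_dvd_mul_left h1
      exact ⟨(i, d'), ⟨Set.mem_Iic.mpr hik, hd'm, hd'g⟩, hdec.symm⟩
    · rintro ⟨⟨i, d'⟩, ⟨hik, hd'm, hd'g⟩, rfl⟩
      exact ⟨(hPm.pow i).mul hd'm, mul_dvd_mul (pow_dvd_pow P hik) hd'g⟩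
  have hinj : Set.InjOn (fun pr : ℕ × Fq[X] => P ^ pr.1 * pr.2) ((Set.Iic k) ×ˢ Dg) := by
    rintro ⟨i, d⟩ ⟨hik, hdm, hdg⟩ ⟨j, d'⟩ ⟨hjk, hd'm, hd'g⟩ heq
    simp only at heq
    have hnd : ¬ P ∣ d := fun hc => hPg (dvd_trans hc hdg)
    have hnd' : ¬ P ∣ d' := fun hc => hPg (dvd_trans hc hd'g)
    have hij : i = j := by
      rcases lt_trichotomy i j with hlt | he | hgt
      · exfalso
        apply hnd
        have h4 : P ^ i * d = P ^ i * (P ^ (j - i) * d') := by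
          rw [heq, ← mul_assoc, ← pow_add]
          congr 2
          omega
        have hd5 := mul_left_cancel₀ (pow_ne_zero i hP0) h4
        exact ⟨P ^ (j - i - 1) * d', by rw [hd5, ← mul_assoc, ← pow_succ']; congr 2; omega⟩
      · exact he
      · exfalso
        apply hnd'
        have h4 : P ^ j * d' = P ^ j * (P ^ (i - j) * d) := by
          rw [← heq, ← mul_assoc, ← pow_add]
          congr 2
          omega
        have hd5 := mul_left_cancel₀ (pow_ne_zero j hP0) h4
        exact ⟨P ^ (i - j - 1) * d, by rw [hd5, ← mul_assoc, ← pow_succ']; congr 2; omega⟩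
    subst hij
    have h6 := mul_left_cancel₀ (pow_ne_zero i hP0) heq
    rw [h6]
  rw [tau, himg, Set.ncard_image_of_injOn hinj]
  have hprod : (Set.Iic k ×ˢ Dg).ncard = (Set.Iic k).ncard * Dg.ncard := by
    rw [← Nat.card_coe_set_eq, ← Nat.card_coe_set_eq, ← Nat.card_coe_set_eq,
      Nat.card_congr (Equiv.Set.prod _ _), Nat.card_prod]
  rw [hprod]
  congr 1
  rw [show (Set.Iic k : Set ℕ) = ↑(Finset.Iic k) by ext; simp, Set.ncard_coe_finset,
    Nat.card_Iic]

end TauLemmas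

/-! ### Existence of a monic irreducible polynomial of each degree -/

lemma aux_exists_monic_irreducible_degree (Fq : Type) [Field Fq] [Fintype Fq]
    (u : ℕ) (hu : 0 < u) :
    ∃ P : Fq[X], P.Monic ∧ Irreducible P ∧ P.natDegree = u := by
  classical
  obtain ⟨p, hcharp⟩ := CharP.exists Fq
  haveI : CharP Fq p := hcharp
  obtain ⟨n, hp, hcard⟩ := FiniteField.card Fq p
  haveI hfact : Fact p.Prime := ⟨hp⟩
  set q := Fintype.card Fq with hqdef
  have hq1 : 1 < q := Fintype.one_lt_card
  set g : Fq[X] := X ^ (q ^ u) - X with hgdef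
  have hg0 : g ≠ 0 := FiniteField.X_pow_card_pow_sub_X_ne_zero Fq (by omega) hq1
  have hgdeg : g.natDegree = q ^ u :=
    FiniteField.X_pow_card_pow_sub_X_natDegree_eq Fq (by omega) hq1
  set K := g.SplittingField with hKdef
  haveI : Finite K := Module.finite_of_finite Fq
  haveI : Fintype K := Fintype.ofFinite K
  haveI : CharP K p := charP_of_injective_algebraMap' (A := K) Fq p
  have hpq : p ∣ q ^ u := hcard ▸ dvd_pow (dvd_pow_self p (by exact_mod_cast n.ne_zero)) (by omega)
  have hsep : g.Separable := galois_poly_separable p (q ^ u) hpq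
  have hsplits := SplittingField.splits g
  have hroots : Fintype.card (g.rootSet K) = q ^ u := by
    rw [card_rootSet_eq_natDegree hsep hsplits, hgdeg]
  have hpnu : p ^ (n * u) = q ^ u := by rw [pow_mul, ← hcard]
  let ψ : K →ₐ[Fq] K :=
    { toRingHom := iterateFrobenius K p (n * u)
      commutes' := fun c => by
        show iterateFrobenius K p (n * u) (algebraMap Fq K c) = algebraMap Fq K c
        rw [iterateFrobenius_def, hpnu, ← map_pow, FiniteField.pow_card_pow] }
  have hfix : ∀ z : K, z ^ (q ^ u) = z := by
    have htop : (⊤ : Subalgebra Fq K) ≤ (AlgHom.equalizer ψ (AlgHom.id Fq K)) := by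
      rw [← Polynomial.IsSplittingField.adjoin_rootSet K g]
      apply Algebra.adjoin_le
      intro z hz
      rw [Polynomial.mem_rootSet] at hz
      have h9 : z ^ (q ^ u) - z = 0 := by
        have := hz.2
        simpa [hgdef] using this
      show ψ z = z
      show iterateFrobenius K p (n * u) z = z
      rw [iterateFrobenius_def, hpnu]
      linear_combination h9
    intro z
    have hz : ψ z = z := htop (Algebra.mem_top (R := Fq) (x := z))
    have hz' : iterateFrobenius K p (n * u) z = z := hz
    rwa [iterateFrobenius_def, hpnu] at hz'
  have huniv : g.rootSet K = Set.univ := by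
    ext z
    simp only [Set.mem_univ, iff_true]
    rw [Polynomial.mem_rootSet]
    refine ⟨hg0, ?_⟩
    simp only [hgdef, map_sub, map_pow, aeval_X]
    rw [hfix z, sub_self]
  have hcardK : Fintype.card K = q ^ u := by
    have h1 : Nat.card (g.rootSet K) = q ^ u := by rw [Nat.card_eq_fintype_card, hroots]
    rw [huniv] at h1
    rw [← Nat.card_eq_fintype_card, ← Nat.card_congr (Equiv.Set.univ K)]
    exact h1
  have hfinrank : Module.finrank Fq K = u := by
    have hcf := Module.card_eq_pow_finrank (K := Fq) (V := K)
    rw [hcardK, ← hqdef] at hcf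
    exact (Nat.pow_right_injective hq1 hcf.symm)
  haveI : IsGalois Fq K := inferInstance
  obtain ⟨z, hz⟩ := Field.exists_primitive_element Fq K
  have hzint : IsIntegral Fq z := Algebra.IsIntegral.isIntegral z
  refine ⟨minpoly Fq z, minpoly.monic hzint, minpoly.irreducible hzint, ?_⟩
  rw [← IntermediateField.adjoin.finrank hzint, hz, ← hfinrank]
  exact IntermediateField.finrank_top'

/-- Bounds on `log τ(h) - log T(N)` for `N = deg h - u`, `1 ≤ u ≤ s - 1`, where `h` is an
`x`-SSHC polynomial for `x = s log q / log(1 + 1/r)`; moreover `T(deg h) = τ(h)`. -/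
theorem log_Tmax_bounds {Fq : Type} [Field Fq] [Fintype Fq]
    (s r : ℕ) (hs : 0 < s) (hr : 0 < r) (x : ℝ)
    (hx : x = (s : ℝ) * Real.log (Fintype.card Fq) / Real.log (1 + 1 / (r : ℝ)))
    (h : Fq[X]) (hh : IsSSHC x h)
    (u N : ℕ) (hu₁ : 1 ≤ u) (hu₂ : u ≤ s - 1) (hN : N + u = h.natDegree) :
    ((u : ℝ) / s) * Real.log (1 + 1 / (r : ℝ)) ≤
        Real.log (tau h : ℝ) - Real.log (Tmax Fq N : ℝ) ∧
      Real.log (tau h : ℝ) - Real.log (Tmax Fq N : ℝ) ≤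
        Real.log (1 + 1 / ((⌊1 / ((Fintype.card Fq : ℝ) ^ ((u : ℝ) / x) - 1)⌋₊ : ℕ) : ℝ)) ∧
      Tmax Fq h.natDegree = tau h := by
  classical
  obtain ⟨hhm, hhle⟩ := hh
  have hs2 : 2 ≤ s := by omega
  have hus : u < s := by omega
  set q := Fintype.card Fq with hqdef
  have hq1 : 1 < q := Fintype.one_lt_card
  have hQ0 : (0:ℝ) < (q:ℝ) := by positivity
  have hQ1 : (1:ℝ) < (q:ℝ) := by exact_mod_cast hq1
  have hlogq : 0 < Real.log q := Real.log_pos hQ1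
  have hr1 : (1:ℝ) < 1 + 1/(r:ℝ) := by
    have : (0:ℝ) < 1/(r:ℝ) := by positivity
    linarith
  have hL : 0 < Real.log (1 + 1/(r:ℝ)) := Real.log_pos hr1
  have hx0 : 0 < x := by
    rw [hx]
    have hs0 : (0:ℝ) < (s:ℝ) := by positivity
    positivity
  set D := h.natDegree with hD
  -- θ = q^(u/x) = (1+1/r)^(u/s)
  set θ : ℝ := (q:ℝ) ^ ((u:ℝ) / x) with hθdef
  have hlogq' : Real.log (q:ℝ) ≠ 0 := ne_of_gt hlogq
  have hL' : Real.log (1 + 1/(r:ℝ)) ≠ 0 := ne_of_gt hL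
  have hs0' : (s:ℝ) ≠ 0 := Nat.cast_ne_zero.mpr (by omega)
  have hexp : Real.log (q:ℝ) * ((u:ℝ) / x) = Real.log (1 + 1/(r:ℝ)) * ((u:ℝ)/(s:ℝ)) := by
    rw [hx]
    field_simp
  have hθ_eq : θ = (1 + 1/(r:ℝ)) ^ ((u:ℝ)/(s:ℝ)) := by
    rw [hθdef, Real.rpow_def_of_pos hQ0, Real.rpow_def_of_pos (by positivity), hexp]
  have hθ0 : 0 < θ := Real.rpow_pos_of_pos hQ0 _
  have hθ1 : 1 < θ := by
    rw [hθdef]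
    refine Real.one_lt_rpow_iff_of_pos hQ0 |>.mpr (Or.inl ⟨hQ1, by positivity⟩)
  have hθlt : θ < 1 + 1/(r:ℝ) := by
    rw [hθ_eq]
    calc (1 + 1/(r:ℝ)) ^ ((u:ℝ)/(s:ℝ)) < (1 + 1/(r:ℝ)) ^ (1:ℝ) := by
          apply Real.rpow_lt_rpow_of_exponent_lt hr1
          rw [div_lt_one (by positivity : (0:ℝ) < (s:ℝ))]
          exact_mod_cast hus
      _ = 1 + 1/(r:ℝ) := Real.rpow_one _
  set c : ℝ := 1 / (θ - 1) with hcdef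
  have hθm1 : 0 < θ - 1 := by linarith
  have hc0 : 0 < c := by rw [hcdef]; positivity
  have hcr : (r:ℝ) < c := by
    rw [hcdef, lt_div_iff₀ hθm1]
    have hrpos : (0:ℝ) < (r:ℝ) := by positivity
    have h10 : θ - 1 < 1/(r:ℝ) := by linarith
    calc (r:ℝ) * (θ - 1) < (r:ℝ) * (1/(r:ℝ)) := by
          exact mul_lt_mul_of_pos_left h10 hrpos
      _ = 1 := by field_simp
  set a : ℕ := ⌊c⌋₊ with hadef
  have har : r ≤ a := Nat.le_floor hcr.le
  have ha1 : 1 ≤ a := le_trans hr har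
  have ha0 : (0:ℝ) < (a:ℝ) := by exact_mod_cast ha1
  have hirr : Irrational θ := hθ_eq ▸ aux_irrational_rpow hr hu₁ hus
  have hac : (a:ℝ) < c := by
    refine lt_of_le_of_ne (Nat.floor_le hc0.le) (fun he => ?_)
    have hθrat : θ = ((1 + ((a:ℚ))⁻¹ : ℚ) : ℝ) := by
      push_cast
      have : θ - 1 = 1 / c := by rw [hcdef]; field_simp
      rw [← he] at this
      have haa : ((a:ℝ)) ≠ 0 := ne_of_gt ha0
      field_simp at this ⊢
      linarith
    exact hirr ⟨_, hθrat.symm⟩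
  -- the irreducible of degree u and the decomposition of h
  obtain ⟨P, hPm, hPi, hPdeg⟩ := aux_exists_monic_irreducible_degree Fq u (by omega)
  obtain ⟨e, g, hPg, hdec⟩ := aux_exists_pow_mul_not_dvd hPi hhm.ne_zero
  have hgm : g.Monic := (hPm.pow e).of_mul_monic_left (hdec ▸ hhm)
  have htauh : tau h = (e+1) * tau g := by rw [hdec]; exact aux_tau_pow_mul hPm hPi hgm hPg e
  have htaug : 0 < tau g := aux_tau_pos hgm
  have htauh0 : 0 < tau h := aux_tau_pos hhm
  have hDdeg : D = e * u + g.natDegree := by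
    rw [hD, hdec, Polynomial.natDegree_mul (pow_ne_zero _ hPm.ne_zero) hgm.ne_zero,
      Polynomial.natDegree_pow, hPdeg]
  -- SSHC applied to P^(e+1) * g gives the exponent bound
  have hkey : ((e:ℝ) + 2) ≤ ((e:ℝ) + 1) * θ := by
    set f1 : Fq[X] := P ^ (e+1) * g with hf1
    have hf1m : f1.Monic := (hPm.pow (e+1)).mul hgm
    have hf1deg : f1.natDegree = D + u := by
      rw [hf1, Polynomial.natDegree_mul (pow_ne_zero _ hPm.ne_zero) hgm.ne_zero,
        Polynomial.natDegree_pow, hPdeg, hDdeg]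
      ring
    have hf1tau : tau f1 = (e+2) * tau g := by
      rw [hf1, aux_tau_pow_mul hPm hPi hgm hPg (e+1)]
    have hle := hhle f1 hf1m
    rw [hf1deg, hf1tau, htauh] at hle
    have hsplit : (q:ℝ) ^ (-((D:ℝ)+(u:ℝ))/x) = (q:ℝ) ^ (-(D:ℝ)/x) * θ⁻¹ := by
      rw [hθdef, ← Real.rpow_neg hQ0.le, ← Real.rpow_add hQ0]
      congr 1
      ring
    have hcast : ((D + u : ℕ) : ℝ) = (D:ℝ) + (u:ℝ) := by push_cast; ring
    rw [hcast, hsplit] at hle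
    set W : ℝ := (q:ℝ) ^ (-(D:ℝ)/x) with hW
    have hW0 : 0 < W := Real.rpow_pos_of_pos hQ0 _
    have htg0 : (0:ℝ) < (tau g : ℝ) := by exact_mod_cast htaug
    have hle2 : ((e:ℝ)+2) * θ⁻¹ ≤ ((e:ℝ)+1) := by
      have h11 : (((e+2) * tau g : ℕ) : ℝ) = ((e:ℝ)+2) * (tau g:ℝ) := by push_cast; ring
      have h12 : (((e+1) * tau g : ℕ) : ℝ) = ((e:ℝ)+1) * (tau g:ℝ) := by push_cast; ring
      rw [h11, h12] at hle
      have h13 : (((e:ℝ)+2) * θ⁻¹) * ((tau g:ℝ) * W) ≤ (((e:ℝ)+1)) * ((tau g:ℝ) * W) := by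
        calc (((e:ℝ)+2) * θ⁻¹) * ((tau g:ℝ) * W) = ((e:ℝ)+2) * (tau g:ℝ) * (W * θ⁻¹) := by ring
          _ ≤ ((e:ℝ)+1) * (tau g:ℝ) * W := hle
          _ = (((e:ℝ)+1)) * ((tau g:ℝ) * W) := by ring
      exact le_of_mul_le_mul_right h13 (by positivity)
    have h15 := mul_le_mul_of_nonneg_right hle2 hθ0.le
    have h16 : ((e:ℝ)+2) * θ⁻¹ * θ = (e:ℝ)+2 := by field_simp
    rw [h16] at h15
    exact h15
  have hce : c ≤ (e:ℝ) + 1 := by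
    rw [hcdef, div_le_iff₀ hθm1]
    nlinarith
  have hae : a ≤ e := by
    have : (a:ℝ) < (e:ℝ) + 1 := lt_of_lt_of_le hac hce
    have : a < e + 1 := by exact_mod_cast this
    omega
  have he1 : 1 ≤ e := le_trans ha1 hae
  -- the competitor polynomial of degree N
  set f0 : Fq[X] := P ^ (e-1) * g with hf0
  have hf0m : f0.Monic := (hPm.pow (e-1)).mul hgm
  have hf0deg : f0.natDegree = N := by
    rw [hf0, Polynomial.natDegree_mul (pow_ne_zero _ hPm.ne_zero) hgm.ne_zero,
      Polynomial.natDegree_pow, hPdeg, Nat.sub_one_mul]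
    have h18 : u ≤ e * u := Nat.le_mul_of_pos_left u he1
    omega
  have hf0tau : tau f0 = e * tau g := by
    rw [hf0, aux_tau_pow_mul hPm hPi hgm hPg (e-1)]
    congr 1
    omega
  -- the set S of tau-values in degree N
  set S : Set ℕ := {t : ℕ | ∃ f : Fq[X], f.Monic ∧ f.natDegree = N ∧ tau f = t} with hS
  have hubS : ∀ t ∈ S, (t:ℝ) ≤ (tau h : ℝ) * θ⁻¹ := by
    rintro t ⟨f, hfm, hfdeg, rfl⟩
    have hle := hhle f hfm
    rw [hfdeg] at hle
    have hsplit : (q:ℝ) ^ (-(D:ℝ)/x) = (q:ℝ) ^ (-(N:ℝ)/x) * θ⁻¹ := by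
      rw [hθdef, ← Real.rpow_neg hQ0.le, ← Real.rpow_add hQ0]
      congr 1
      have : (D:ℝ) = (N:ℝ) + (u:ℝ) := by exact_mod_cast congrArg (Nat.cast : ℕ → ℝ) hN.symm
      rw [this]
      ring
    rw [hsplit] at hle
    set W : ℝ := (q:ℝ) ^ (-(N:ℝ)/x) with hW
    have hW0 : 0 < W := Real.rpow_pos_of_pos hQ0 _
    have h13 : (tau f : ℝ) * W ≤ ((tau h : ℝ) * θ⁻¹) * W := by
      calc (tau f : ℝ) * W ≤ (tau h : ℝ) * (W * θ⁻¹) := hle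
        _ = ((tau h : ℝ) * θ⁻¹) * W := by ring
    exact le_of_mul_le_mul_right h13 hW0
  have hθi : θ⁻¹ ≤ 1 := by
    rw [inv_eq_one_div, div_le_one hθ0]
    linarith
  have hτh0R : (0:ℝ) < (tau h : ℝ) := by exact_mod_cast htauh0
  have hboundN : ∀ t ∈ S, t ≤ tau h := by
    intro t ht
    have h1 := hubS t ht
    have h2 : (tau h : ℝ) * θ⁻¹ ≤ (tau h : ℝ) := mul_le_of_le_one_right hτh0R.le hθi
    have h3 : (t:ℝ) ≤ (tau h : ℝ) := le_trans h1 h2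
    exact_mod_cast h3
  have hbddS : BddAbove S := ⟨tau h, fun t ht => hboundN t ht⟩
  have hmemS : tau f0 ∈ S := ⟨f0, hf0m, hf0deg, rfl⟩
  have hTdef : Tmax Fq N = sSup S := rfl
  have hTge : tau f0 ≤ Tmax Fq N := by rw [hTdef]; exact le_csSup hbddS hmemS
  have hTmemS : Tmax Fq N ∈ S := by rw [hTdef]; exact Nat.sSup_mem ⟨tau f0, hmemS⟩ hbddS
  have hT0 : 0 < Tmax Fq N := by
    obtain ⟨f, hfm, _, hft⟩ := hTmemS
    rw [← hft]
    exact aux_tau_pos hfm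
  have hT0R : (0:ℝ) < (Tmax Fq N : ℝ) := by exact_mod_cast hT0
  have hTub : (Tmax Fq N : ℝ) ≤ (tau h : ℝ) * θ⁻¹ := hubS _ hTmemS
  have hlogθ : Real.log θ = ((u:ℝ)/(s:ℝ)) * Real.log (1 + 1/(r:ℝ)) := by
    rw [hθdef, Real.log_rpow hQ0]
    calc (u:ℝ)/x * Real.log (q:ℝ) = Real.log (q:ℝ) * ((u:ℝ)/x) := by ring
      _ = Real.log (1 + 1/(r:ℝ)) * ((u:ℝ)/(s:ℝ)) := hexp
      _ = ((u:ℝ)/(s:ℝ)) * Real.log (1 + 1/(r:ℝ)) := by ring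
  -- Part A
  have partA : ((u:ℝ)/(s:ℝ)) * Real.log (1 + 1/(r:ℝ)) ≤
      Real.log (tau h : ℝ) - Real.log (Tmax Fq N : ℝ) := by
    have h1 : Real.log (Tmax Fq N : ℝ) ≤ Real.log ((tau h : ℝ) * θ⁻¹) :=
      Real.log_le_log hT0R hTub
    rw [Real.log_mul (ne_of_gt hτh0R) (ne_of_gt (inv_pos.mpr hθ0)), Real.log_inv] at h1
    rw [← hlogθ]
    linarith
  -- Part B
  have ha0' : (1:ℝ) + 1/(a:ℝ) > 0 := by positivity
  have partB : Real.log (tau h : ℝ) - Real.log (Tmax Fq N : ℝ) ≤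
      Real.log (1 + 1/(a:ℝ)) := by
    have htg0 : (0:ℝ) < (tau g : ℝ) := by exact_mod_cast htaug
    have hea : (a:ℝ) ≤ (e:ℝ) := by exact_mod_cast hae
    have he0 : (0:ℝ) < (e:ℝ) := by
      have : 0 < e := he1
      exact_mod_cast this
    have hf0R : (tau f0 : ℝ) = (e:ℝ) * (tau g : ℝ) := by exact_mod_cast hf0tau
    have hτhR : (tau h : ℝ) = ((e:ℝ)+1) * (tau g : ℝ) := by exact_mod_cast htauh
    have h1 : ((e:ℝ)+1) * (tau g:ℝ) ≤ ((e:ℝ) * (tau g:ℝ)) * (1 + 1/(a:ℝ)) := by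
      have h3 : (1:ℝ) ≤ (e:ℝ)/(a:ℝ) := (one_le_div ha0).mpr hea
      have h4 : ((e:ℝ) * (tau g:ℝ)) * (1 + 1/(a:ℝ))
          = (e:ℝ)*(tau g:ℝ) + ((e:ℝ)/(a:ℝ))*(tau g:ℝ) := by
        field_simp
      have h7 : (1:ℝ) * (tau g:ℝ) ≤ ((e:ℝ)/(a:ℝ)) * (tau g:ℝ) :=
        mul_le_mul_of_nonneg_right h3 htg0.le
      rw [one_mul] at h7
      linarith [h4]
    have h2 : (tau h : ℝ) ≤ (Tmax Fq N : ℝ) * (1 + 1/(a:ℝ)) := by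
      have h5 : (tau f0 : ℝ) ≤ (Tmax Fq N : ℝ) := by exact_mod_cast hTge
      calc (tau h : ℝ) = ((e:ℝ)+1) * (tau g:ℝ) := hτhR
        _ ≤ ((e:ℝ) * (tau g:ℝ)) * (1 + 1/(a:ℝ)) := h1
        _ = (tau f0 : ℝ) * (1 + 1/(a:ℝ)) := by rw [hf0R]
        _ ≤ (Tmax Fq N : ℝ) * (1 + 1/(a:ℝ)) := by
            exact mul_le_mul_of_nonneg_right h5 ha0'.le
    have h6 : Real.log (tau h : ℝ) ≤ Real.log ((Tmax Fq N : ℝ) * (1 + 1/(a:ℝ))) :=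
      Real.log_le_log hτh0R h2
    rw [Real.log_mul (ne_of_gt hT0R) (ne_of_gt ha0')] at h6
    linarith
  -- Part C
  have partC : Tmax Fq D = tau h := by
    set SD : Set ℕ := {t : ℕ | ∃ f : Fq[X], f.Monic ∧ f.natDegree = D ∧ tau f = t} with hSD
    have hboundD : ∀ t ∈ SD, t ≤ tau h := by
      rintro t ⟨f, hfm, hfdeg, rfl⟩
      have hle := hhle f hfm
      rw [hfdeg] at hle
      have hW0 : (0:ℝ) < (q:ℝ) ^ (-(D:ℝ)/x) := Real.rpow_pos_of_pos hQ0 _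
      have h1 : (tau f : ℝ) ≤ (tau h : ℝ) := le_of_mul_le_mul_right hle hW0
      exact_mod_cast h1
    have hmemD : tau h ∈ SD := ⟨h, hhm, rfl, rfl⟩
    have hTDdef : Tmax Fq D = sSup SD := rfl
    rw [hTDdef]
    exact le_antisymm (csSup_le ⟨tau h, hmemD⟩ hboundD)
      (le_csSup ⟨tau h, fun t ht => hboundD t ht⟩ hmemD)
  exact ⟨partA, partB, partC⟩
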